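/- Let m ≥ 1, let c_1, ..., c_m be positive reals and ω_0, ω_1, ..., ω_m be positive reals, set A_j = c_j/ω_j, and assume A_1 < A_2 < ... < A_m. Let M be the (m+1)×(m+1) real matrix with M_{00} = (Σ_{j=1}^m c_j)/ω_0, M_{0j} = −c_j/ω_0, M_{j0} = −c_j/ω_j, M_{jj} = c_j/ω_j for 1 ≤ j ≤ m, and all other entries zero, and let F(λ) = 1 + Σ_{j=1}^m A_j ω_j/(ω_0 (A_j − λ)). Then a real number λ is an eigenvalue of M (i.e., M v = λ v for some nonzero v ∈ ℝ^{m+1}) if and only if λ = 0, or λ ∉ {A_1, ..., A_m} and F(λ) = 0. -/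

import Mathlib

open Fin.NatCast

/-- With positive `c_1, …, c_m`, positive `ω_0, …, ω_m`,
`A_j = c_j/ω_j` strictly increasing, and `M` the matrix (3.5) of the paper,
a real `λ` is an eigenvalue of `M` iff `λ = 0`, or `λ ∉ {A_1, …, A_m}` and
`F(λ) = 1 + ∑ⱼ A_j ω_j/(ω_0(A_j − λ)) = 0`. -/
theorem stmt_13 (m : ℕ) (hm : 1 ≤ m) (c ω : ℕ → ℝ)
    (hc : ∀ j, 1 ≤ j → j ≤ m → 0 < c j)
    (hω : ∀ j ≤ m, 0 < ω j)
    (A : ℕ → ℝ) (hA : ∀ j, A j = c j / ω j)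
    (hAmono : ∀ i j, 1 ≤ i → i < j → j ≤ m → A i < A j)
    (M : Matrix (Fin (m + 1)) (Fin (m + 1)) ℝ)
    (hM : ∀ i j : Fin (m + 1), M i j =
      if i = 0 then
        (if j = 0 then (∑ k ∈ Finset.Icc 1 m, c k) / ω 0 else -c j.val / ω 0)
      else
        (if j = 0 then -c i.val / ω i.val
         else if i = j then c i.val / ω i.val else 0))
    (lam : ℝ) :
    (∃ v : Fin (m + 1) → ℝ, v ≠ 0 ∧ M.mulVec v = lam • v) ↔
      (lam = 0 ∨ ((∀ j, 1 ≤ j → j ≤ m → lam ≠ A j) ∧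
        1 + ∑ j ∈ Finset.Icc 1 m, A j * ω j / (ω 0 * (A j - lam)) = 0)) := by
  have hω0 : (0:ℝ) < ω 0 := hω 0 (Nat.zero_le m)
  have hcA : ∀ j, 1 ≤ j → j ≤ m → c j = A j * ω j := by
    intro j h1 h2
    rw [hA j, div_mul_cancel₀ _ (ne_of_gt (hω j h2))]
  have hApos : ∀ j, 1 ≤ j → j ≤ m → 0 < A j := by
    intro j h1 h2
    rw [hA j]
    exact div_pos (hc j h1 h2) (hω j h2)
  -- index helpers
  have hval : ∀ j ∈ Finset.Icc 1 m, ((j : Fin (m+1)) : ℕ) = j := by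
    intro j hj
    simp only [Finset.mem_Icc] at hj
    exact Fin.val_cast_of_lt (by omega)
  have hcne0 : ∀ j ∈ Finset.Icc 1 m, (j : Fin (m+1)) ≠ 0 := by
    intro j hj h
    have h2 := hval j hj
    rw [h] at h2
    simp only [Fin.val_zero] at h2
    simp only [Finset.mem_Icc] at hj
    omega
  have hsum : ∀ f : Fin (m+1) → ℝ, ∑ i, f i = f 0 + ∑ j ∈ Finset.Icc 1 m, f (j : Fin (m+1)) := by
    intro f
    have h1 : ∑ i : Fin (m+1), f i = ∑ i ∈ Finset.range (m+1), f i := by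
      rw [← Fin.sum_univ_eq_sum_range (fun i => f i) (m+1)]
      exact Finset.sum_congr rfl fun i _ => by rw [Fin.cast_val_eq_self]
    rw [h1, Finset.sum_range_succ']
    have h2 : ∑ j ∈ Finset.Icc 1 m, f (j : Fin (m+1)) = ∑ i ∈ Finset.range m, f ((i+1 : ℕ) : Fin (m+1)) := by
      rw [← Finset.Ico_add_one_right_eq_Icc, Finset.sum_Ico_eq_sum_range]
      exact Finset.sum_congr rfl fun i _ => by rw [Nat.add_comm 1 i]
    rw [h2]
    simp [add_comm]
  -- matrix entries
  have hM00 : M 0 0 = (∑ k ∈ Finset.Icc 1 m, c k) / ω 0 := by rw [hM]; simp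
  have hM0j : ∀ j ∈ Finset.Icc 1 m, M 0 (j : Fin (m+1)) = -c j / ω 0 := by
    intro j hj
    rw [hM, if_pos rfl, if_neg (hcne0 j hj), hval j hj]
  have hMk0 : ∀ k ∈ Finset.Icc 1 m, M (k : Fin (m+1)) 0 = -(A k) := by
    intro k hk
    rw [hM, if_neg (hcne0 k hk), if_pos rfl, hval k hk, hA k, neg_div]
  have hMkj : ∀ k ∈ Finset.Icc 1 m, ∀ j ∈ Finset.Icc 1 m,
      M (k : Fin (m+1)) (j : Fin (m+1)) = if k = j then A k else 0 := by
    intro k hk j hj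
    rw [hM, if_neg (hcne0 k hk), if_neg (hcne0 j hj)]
    by_cases h : k = j
    · subst h
      rw [if_pos rfl, if_pos rfl, hval k hk, hA k]
    · rw [if_neg h, if_neg (fun hh : (k : Fin (m+1)) = (j : Fin (m+1)) =>
        h (by rw [← hval k hk, ← hval j hj, hh]))]
  -- row formulas
  have hrow0 : ∀ w : Fin (m+1) → ℝ, M.mulVec w 0 =
      (∑ k ∈ Finset.Icc 1 m, c k) / ω 0 * w 0
        + ∑ j ∈ Finset.Icc 1 m, (-c j / ω 0) * w (j : Fin (m+1)) := by
    intro w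
    have h1 : M.mulVec w 0 = ∑ j, M 0 j * w j := by
      simp [Matrix.mulVec, dotProduct]
    rw [h1, hsum (fun j => M 0 j * w j), hM00]
    exact congrArg _ (Finset.sum_congr rfl fun j hj => by rw [hM0j j hj])
  have hrowk : ∀ w : Fin (m+1) → ℝ, ∀ k ∈ Finset.Icc 1 m,
      M.mulVec w (k : Fin (m+1)) = -(A k) * w 0 + A k * w (k : Fin (m+1)) := by
    intro w k hk
    have h1 : M.mulVec w (k : Fin (m+1)) = ∑ j, M (k : Fin (m+1)) j * w j := by
      simp [Matrix.mulVec, dotProduct]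
    rw [h1, hsum (fun j => M (k : Fin (m+1)) j * w j), hMk0 k hk]
    congr 1
    rw [Finset.sum_congr rfl fun j hj => by rw [hMkj k hk j hj]]
    simp only [ite_mul, zero_mul]
    rw [Finset.sum_ite_eq, if_pos hk]
  -- eigen-equation characterization
  have hiff : ∀ w : Fin (m+1) → ℝ, M.mulVec w = lam • w ↔
      ((∑ k ∈ Finset.Icc 1 m, c k) / ω 0 * w 0
          + ∑ j ∈ Finset.Icc 1 m, (-c j / ω 0) * w (j : Fin (m+1)) = lam * w 0 ∧
        ∀ k ∈ Finset.Icc 1 m,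
          -(A k) * w 0 + A k * w (k : Fin (m+1)) = lam * w (k : Fin (m+1))) := by
    intro w
    constructor
    · intro h
      refine ⟨?_, fun k hk => ?_⟩
      · have h0 := congrFun h 0
        rw [hrow0 w] at h0
        simpa using h0
      · have hkk := congrFun h (k : Fin (m+1))
        rw [hrowk w k hk] at hkk
        simpa using hkk
    · rintro ⟨h0, hk⟩
      funext i
      by_cases hi : i = 0
      · subst hi
        rw [hrow0 w]
        simpa using h0
      · have hvi : i.val ∈ Finset.Icc 1 m := by
          have h1 : i.val ≠ 0 := fun h => hi (Fin.ext (by simp [h]))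
          have h2 := i.isLt
          simp only [Finset.mem_Icc]
          omega
        have hkk := hk i.val hvi
        rw [Fin.cast_val_eq_self] at hkk
        have h2 := hrowk w i.val hvi
        rw [Fin.cast_val_eq_self] at h2
        rw [h2]
        simpa using hkk
  -- key term identity
  have hkey : ∀ j ∈ Finset.Icc 1 m, A j - lam ≠ 0 →
      (-c j / ω 0) * (A j / (A j - lam)) =
        -c j / ω 0 - lam * (A j * ω j / (ω 0 * (A j - lam))) := by
    intro j hj hjne
    simp only [Finset.mem_Icc] at hj
    rw [hcA j hj.1 hj.2]
    field_simp
    ring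
  have hsumneg : ∑ j ∈ Finset.Icc 1 m, (-c j / ω 0)
      = -((∑ k ∈ Finset.Icc 1 m, c k) / ω 0) := by
    rw [Finset.sum_div]
    rw [← Finset.sum_neg_distrib]
    exact Finset.sum_congr rfl fun j _ => by rw [neg_div]
  constructor
  · rintro ⟨v, hv, hMv⟩
    rw [hiff v] at hMv
    obtain ⟨h0, hk⟩ := hMv
    by_cases hlam : lam = 0
    · exact Or.inl hlam
    right
    -- lam is not one of the A j
    have hne : ∀ j, 1 ≤ j → j ≤ m → lam ≠ A j := by
      intro k h1 h2 heq
      have hkI : k ∈ Finset.Icc 1 m := Finset.mem_Icc.2 ⟨h1, h2⟩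
      have e1 := hk k hkI
      rw [heq] at e1
      have hv0 : v 0 = 0 := by
        have hAk := hApos k h1 h2
        have h3 : A k * v 0 = 0 := by linarith
        rcases mul_eq_zero.1 h3 with h | h
        · exact absurd h (ne_of_gt hAk)
        · exact h
      have hvj : ∀ j ∈ Finset.Icc 1 m, j ≠ k → v ((j : ℕ) : Fin (m+1)) = 0 := by
        intro j hj hjk
        simp only [Finset.mem_Icc] at hj
        have e2 := hk j (Finset.mem_Icc.2 hj)
        rw [heq, hv0] at e2
        have hAne : A j ≠ A k := by
          rcases lt_trichotomy j k with h | h | h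
          · exact ne_of_lt (hAmono j k hj.1 h h2)
          · exact absurd h hjk
          · exact ne_of_gt (hAmono k j h1 h hj.2)
        have h3 : (A j - A k) * v ((j : ℕ) : Fin (m+1)) = 0 := by
          linear_combination e2
        rcases mul_eq_zero.1 h3 with h | h
        · exact absurd (sub_eq_zero.1 h) hAne
        · exact h
      have hvk : v ((k : ℕ) : Fin (m+1)) = 0 := by
        have hs1 : ∑ j ∈ Finset.Icc 1 m, (-c j / ω 0) * v ((j : ℕ) : Fin (m+1))
            = (-c k / ω 0) * v ((k : ℕ) : Fin (m+1)) :=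
          Finset.sum_eq_single_of_mem k hkI
            (fun j hj hjk => by rw [hvj j hj hjk, mul_zero])
        rw [hs1, hv0] at h0
        have hck := hc k h1 h2
        have hne2 : -c k / ω 0 ≠ 0 := by
          apply div_ne_zero _ (ne_of_gt hω0)
          simpa using ne_of_gt hck
        have h3 : (-c k / ω 0) * v ((k : ℕ) : Fin (m+1)) = 0 := by linarith
        rcases mul_eq_zero.1 h3 with h | h
        · exact absurd h hne2
        · exact h
      apply hv
      funext i
      by_cases hi : i = 0
      · subst hi; simpa using hv0
      · have hvi : i.val ∈ Finset.Icc 1 m := by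
          have h1' : i.val ≠ 0 := fun h => hi (Fin.ext (by simp [h]))
          have h2' := i.isLt
          simp only [Finset.mem_Icc]
          omega
        by_cases hik : i.val = k
        · have h4 := hvk
          rw [← hik, Fin.cast_val_eq_self] at h4
          simpa using h4
        · have h4 := hvj i.val hvi hik
          rw [Fin.cast_val_eq_self] at h4
          simpa using h4
    refine ⟨hne, ?_⟩
    have hAl : ∀ j ∈ Finset.Icc 1 m, A j - lam ≠ 0 := by
      intro j hj
      simp only [Finset.mem_Icc] at hj
      exact sub_ne_zero_of_ne (hne j hj.1 hj.2).symm
    have hvf : ∀ j ∈ Finset.Icc 1 m,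
        v ((j : ℕ) : Fin (m+1)) = (A j / (A j - lam)) * v 0 := by
      intro j hj
      have e := hk j hj
      have hne2 := hAl j hj
      field_simp
      linarith
    have hv0 : v 0 ≠ 0 := by
      intro h
      apply hv
      funext i
      by_cases hi : i = 0
      · subst hi; simpa using h
      · have hvi : i.val ∈ Finset.Icc 1 m := by
          have h1' : i.val ≠ 0 := fun hh => hi (Fin.ext (by simp [hh]))
          have h2' := i.isLt
          simp only [Finset.mem_Icc]
          omega
        have h4 := hvf i.val hvi
        rw [Fin.cast_val_eq_self, h, mul_zero] at h4
        simpa using h4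
    set T := ∑ j ∈ Finset.Icc 1 m, A j * ω j / (ω 0 * (A j - lam)) with hT
    have e0 : (∑ k ∈ Finset.Icc 1 m, c k) / ω 0 * v 0
        + ∑ j ∈ Finset.Icc 1 m,
            ((-c j / ω 0) * (A j / (A j - lam))) * v 0 = lam * v 0 := by
      rw [← h0]
      congr 1
      exact Finset.sum_congr rfl fun j hj => by rw [hvf j hj]; ring
    have hs2 : ∑ j ∈ Finset.Icc 1 m, ((-c j / ω 0) * (A j / (A j - lam))) * v 0
        = (-((∑ k ∈ Finset.Icc 1 m, c k) / ω 0) - lam * T) * v 0 := by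
      rw [← Finset.sum_mul]
      congr 1
      have h5 : ∀ j ∈ Finset.Icc 1 m, (-c j / ω 0) * (A j / (A j - lam)) =
          -c j / ω 0 - lam * (A j * ω j / (ω 0 * (A j - lam))) :=
        fun j hj => hkey j hj (hAl j hj)
      rw [Finset.sum_congr rfl h5, Finset.sum_sub_distrib, hsumneg, ← Finset.mul_sum]
    rw [hs2] at e0
    have h6 : lam * v 0 * (T + 1) = 0 := by linear_combination -e0
    rcases mul_eq_zero.1 h6 with h | h
    · exact absurd h (mul_ne_zero hlam hv0)
    · linarith
  · rintro (rfl | ⟨h1, h2⟩)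
    · refine ⟨fun _ => 1, ?_, ?_⟩
      · intro h
        have h3 := congrFun h 0
        simp at h3
      · rw [hiff]
        refine ⟨?_, fun k hk => by ring⟩
        rw [Finset.sum_congr rfl fun (j : ℕ) (hj : j ∈ Finset.Icc 1 m) =>
          mul_one (-c j / ω 0)]
        rw [hsumneg]
        ring
    · have hAl : ∀ j ∈ Finset.Icc 1 m, A j - lam ≠ 0 := by
        intro j hj
        simp only [Finset.mem_Icc] at hj
        exact sub_ne_zero_of_ne (h1 j hj.1 hj.2).symm
      obtain ⟨w, hw0, hwj⟩ : ∃ w : Fin (m+1) → ℝ, w 0 = 1 ∧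
          ∀ j ∈ Finset.Icc 1 m, w ((j : ℕ) : Fin (m+1)) = A j / (A j - lam) := by
        refine ⟨fun i => if i = 0 then 1 else A i.val / (A i.val - lam), by simp, ?_⟩
        intro j hj
        simp only [if_neg (hcne0 j hj), hval j hj]
      refine ⟨w, ?_, ?_⟩
      · intro h
        apply one_ne_zero (α := ℝ)
        rw [← hw0, h]
        simp
      · rw [hiff]
        constructor
        · rw [hw0, mul_one]
          have h5 : ∀ j ∈ Finset.Icc 1 m, (-c j / ω 0) * w ((j : ℕ) : Fin (m+1)) =
              -c j / ω 0 - lam * (A j * ω j / (ω 0 * (A j - lam))) := by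
            intro j hj
            rw [hwj j hj]
            exact hkey j hj (hAl j hj)
          rw [Finset.sum_congr rfl h5, Finset.sum_sub_distrib, hsumneg, ← Finset.mul_sum]
          have hT : ∑ j ∈ Finset.Icc 1 m, A j * ω j / (ω 0 * (A j - lam)) = -1 := by
            linarith
          rw [hT]
          ring
        · intro k hk
          rw [hw0, hwj k hk]
          have hne2 := hAl k hk
          field_simp
          ring
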